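/- The function d_Teich(X, Y) = (1/2)·max{|log λ| : λ eigenvalue of XY⁻¹} is a metric on the set of positive-definite symmetric real n×n matrices of determinant 1: it is nonnegative, symmetric, vanishes exactly on the diagonal, and satisfies the triangle inequality. -/

import Mathlib

open Matrix

/-- `d_Teich(X, Y) = (1/2) max { |log λ| : λ eigenvalue of X Y⁻¹ }`. -/
noncomputable def dTeich {n : ℕ} (X Y : Matrix (Fin n) (Fin n) ℝ) : ℝ :=
  (1 / 2) * sSup {r : ℝ | ∃ lam ∈ spectrum ℝ (X * Y⁻¹), r = |Real.log lam|}

variable {n : ℕ}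

lemma herm_spec {A : Matrix (Fin n) (Fin n) ℝ} (hA : A.IsHermitian) :
    spectrum ℝ A = Set.range hA.eigenvalues := by
  exact hA.spectrum_real_eq_range_eigenvalues

-- the square root of a posdef matrix: bundled facts
lemma sqrt_facts {Y : Matrix (Fin n) (Fin n) ℝ} (hY : Y.PosDef) :
    ∃ S : Matrix (Fin n) (Fin n) ℝ, S.IsHermitian ∧ S * S = Y ∧ S * S⁻¹ = 1 ∧ S⁻¹ * S = 1
      ∧ (S⁻¹).IsHermitian := by
  obtain ⟨S, hS, -, hSS⟩ := open scoped MatrixOrder in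
    CFC.exists_sqrt_of_isSelfAdjoint_of_quasispectrumRestricts hY.isHermitian
      (QuasispectrumRestricts.nnreal_of_nonneg hY.posSemidef.nonneg)
  refine ⟨S, hS, hSS, ?_, ?_, ?_⟩
  all_goals
    have hd : IsUnit S.det := by
      have h := hY.det_pos
      rw [← hSS, det_mul] at h
      rcases mul_self_nonneg S.det |>.lt_or_eq with h2 | h2
      · exact isUnit_iff_ne_zero.2 (by nlinarith)
      · exfalso; rw [← h2] at h; exact lt_irrefl _ h
  · exact mul_nonsing_inv _ hd
  · exact nonsing_inv_mul _ hd
  · exact IsHermitian.inv hS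

-- eigen characterization of spectrum of X * Y⁻¹
lemma mem_spec_iff {X Y : Matrix (Fin n) (Fin n) ℝ} (hY : Y.PosDef) (lam : ℝ) :
    lam ∈ spectrum ℝ (X * Y⁻¹) ↔ ∃ v ≠ 0, X *ᵥ v = lam • (Y *ᵥ v) := by
  have hYd : IsUnit Y.det := isUnit_iff_ne_zero.2 (ne_of_gt hY.det_pos)
  have h1 : Y * Y⁻¹ = 1 := mul_nonsing_inv _ hYd
  have h2 : Y⁻¹ * Y = 1 := nonsing_inv_mul _ hYd
  have key : lam ∈ spectrum ℝ (X * Y⁻¹) ↔ ∃ w ≠ 0, (X * Y⁻¹) *ᵥ w = lam • w := by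
    rw [spectrum.mem_iff, Matrix.isUnit_iff_isUnit_det, isUnit_iff_ne_zero, not_not,
      ← Matrix.exists_mulVec_eq_zero_iff]
    constructor
    · rintro ⟨v, hv, h⟩
      refine ⟨v, hv, ?_⟩
      have := h
      rw [Matrix.sub_mulVec, sub_eq_zero] at this
      rw [← this, Algebra.algebraMap_eq_smul_one, Matrix.smul_mulVec, Matrix.one_mulVec]
    · rintro ⟨v, hv, h⟩
      refine ⟨v, hv, ?_⟩
      rw [Matrix.sub_mulVec, sub_eq_zero, h, Algebra.algebraMap_eq_smul_one,
        Matrix.smul_mulVec, Matrix.one_mulVec]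
  rw [key]
  constructor
  · rintro ⟨w, hw, h⟩
    refine ⟨Y⁻¹ *ᵥ w, ?_, ?_⟩
    · intro h0
      apply hw
      have : Y *ᵥ (Y⁻¹ *ᵥ w) = Y *ᵥ 0 := congrArg _ h0
      rwa [Matrix.mulVec_mulVec, h1, Matrix.one_mulVec, Matrix.mulVec_zero] at this
    · have e : Y *ᵥ (Y⁻¹ *ᵥ w) = w := by
        rw [Matrix.mulVec_mulVec, h1, Matrix.one_mulVec]
      rw [e, Matrix.mulVec_mulVec]; exact h
  · rintro ⟨v, hv, h⟩
    refine ⟨Y *ᵥ v, ?_, ?_⟩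
    · intro h0
      apply hv
      have : Y⁻¹ *ᵥ (Y *ᵥ v) = Y⁻¹ *ᵥ 0 := congrArg _ h0
      rwa [Matrix.mulVec_mulVec, h2, Matrix.one_mulVec, Matrix.mulVec_zero] at this
    · have e : Y⁻¹ *ᵥ (Y *ᵥ v) = v := by
        rw [Matrix.mulVec_mulVec, h2, Matrix.one_mulVec]
      rw [← Matrix.mulVec_mulVec, e]; exact h

-- abbreviation facts for H = S⁻¹ X S⁻¹
lemma conj_facts {X Y : Matrix (Fin n) (Fin n) ℝ} (hX : X.PosDef) (hY : Y.PosDef) :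
    ∃ S H : Matrix (Fin n) (Fin n) ℝ, S.IsHermitian ∧ S * S = Y ∧ S * S⁻¹ = 1 ∧ S⁻¹ * S = 1 ∧
      H = S⁻¹ * X * S⁻¹ ∧ H.PosDef ∧ spectrum ℝ (X * Y⁻¹) = spectrum ℝ H ∧
      S * H * S = X := by
  obtain ⟨S, hSh, hSS, hS1, hS2, hSinv⟩ := sqrt_facts hY
  have hSu : IsUnit S := by
    rw [Matrix.isUnit_iff_isUnit_det]
    exact IsUnit.of_mul_eq_one _ (by rw [← Matrix.det_mul, hS1, Matrix.det_one])
  refine ⟨S, S⁻¹ * X * S⁻¹, hSh, hSS, hS1, hS2, rfl, ?_, ?_, ?_⟩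
  · -- PosDef
    refine Matrix.PosDef.of_dotProduct_mulVec_pos ?_ ?_
    · have : (S⁻¹ * X * S⁻¹).conjTranspose = S⁻¹ * X * S⁻¹ := by
        rw [conjTranspose_mul, conjTranspose_mul, hSinv.eq, hX.isHermitian.eq]
        rw [Matrix.mul_assoc]
      exact this
    · intro v hv
      have hv' : S⁻¹ *ᵥ v ≠ 0 := by
        intro h0
        apply hv
        have : S *ᵥ (S⁻¹ *ᵥ v) = S *ᵥ 0 := congrArg _ h0
        rwa [Matrix.mulVec_mulVec, hS1, Matrix.one_mulVec, Matrix.mulVec_zero] at this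
      have hpos := hX.dotProduct_mulVec_pos hv'
      have e : dotProduct (star (S⁻¹ *ᵥ v)) (X *ᵥ (S⁻¹ *ᵥ v))
          = dotProduct (star v) ((S⁻¹ * X * S⁻¹) *ᵥ v) := by
        rw [star_mulVec, hSinv.eq, Matrix.mulVec_mulVec, ← Matrix.dotProduct_mulVec,
          Matrix.mulVec_mulVec, Matrix.mul_assoc]
      rwa [e] at hpos
  · -- spectrum equality
    obtain ⟨u, hu⟩ := hSu
    have hYinv : Y⁻¹ = S⁻¹ * S⁻¹ := by rw [← hSS, Matrix.mul_inv_rev]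
    have hcoe : ((u⁻¹ : (Matrix (Fin n) (Fin n) ℝ)ˣ) : Matrix (Fin n) (Fin n) ℝ) = S⁻¹ := by
      rw [← hu, Matrix.coe_units_inv]
    have key : S⁻¹ * X * S⁻¹ = ((u⁻¹ : (Matrix (Fin n) (Fin n) ℝ)ˣ) : Matrix (Fin n) (Fin n) ℝ)
        * (X * Y⁻¹) * u := by
      simp only [hcoe, hu, hYinv, Matrix.mul_assoc, hS2, Matrix.mul_one]
    rw [show spectrum ℝ (S⁻¹ * X * S⁻¹)
        = spectrum ℝ (((u⁻¹ : (Matrix (Fin n) (Fin n) ℝ)ˣ) : Matrix (Fin n) (Fin n) ℝ)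
          * (X * Y⁻¹) * u) from congrArg _ key, spectrum.units_conjugate']
  · have cancel1 : ∀ B : Matrix (Fin n) (Fin n) ℝ, S * (S⁻¹ * B) = B := fun B => by
      rw [← Matrix.mul_assoc, hS1, Matrix.one_mul]
    simp only [Matrix.mul_assoc, hS2, Matrix.mul_one, cancel1]

lemma spec_pos {X Y : Matrix (Fin n) (Fin n) ℝ} (hX : X.PosDef) (hY : Y.PosDef) :
    ∀ lam ∈ spectrum ℝ (X * Y⁻¹), 0 < lam := by
  obtain ⟨S, H, hSh, hSS, hS1, hS2, hHdef, hH, hspec, hSHS⟩ := conj_facts hX hY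
  rw [hspec, herm_spec hH.isHermitian]
  rintro lam ⟨i, rfl⟩
  exact hH.eigenvalues_pos i

lemma quad_le {X Y : Matrix (Fin n) (Fin n) ℝ} (hX : X.PosDef) (hY : Y.PosDef) {c : ℝ}
    (hc : ∀ lam ∈ spectrum ℝ (X * Y⁻¹), lam ≤ c) (v : Fin n → ℝ) :
    dotProduct v (X *ᵥ v) ≤ c * dotProduct v (Y *ᵥ v) := by
  obtain ⟨S, H, hSh, hSS, hS1, hS2, hHdef, hH, hspec, hSHS⟩ := conj_facts hX hY
  have hherm : (c • (1 : Matrix (Fin n) (Fin n) ℝ) - H).IsHermitian := by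
    show _ = _
    rw [Matrix.conjTranspose_sub, Matrix.conjTranspose_smul, Matrix.conjTranspose_one,
      star_trivial, hH.isHermitian.eq]
  have heig : ∀ i, 0 ≤ hherm.eigenvalues i := by
    intro i
    have hmem := hherm.eigenvalues_mem_spectrum_real i
    have e : c • (1 : Matrix (Fin n) (Fin n) ℝ) - H
        = (algebraMap ℝ (Matrix (Fin n) (Fin n) ℝ)) c - H := by
      rw [Algebra.algebraMap_eq_smul_one]
    rw [show spectrum ℝ (c • (1 : Matrix (Fin n) (Fin n) ℝ) - H)
        = spectrum ℝ ((algebraMap ℝ (Matrix (Fin n) (Fin n) ℝ)) c - H) from congrArg _ e,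
      ← spectrum.singleton_sub_eq, ← hspec] at hmem
    obtain ⟨a, ha, b, hb, hab⟩ := Set.mem_sub.mp hmem
    rw [Set.mem_singleton_iff] at ha
    subst ha
    rw [← hab]
    have := hc b hb
    linarith
  have hps : (c • (1 : Matrix (Fin n) (Fin n) ℝ) - H).PosSemidef :=
    hherm.posSemidef_iff_eigenvalues_nonneg.mpr heig
  have h2 : (c • Y - X).PosSemidef := by
    have h3 := hps.conjTranspose_mul_mul_same (B := S)
    have e : Sᴴ * (c • (1 : Matrix (Fin n) (Fin n) ℝ) - H) * S = c • Y - X := by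
      rw [hSh.eq, Matrix.mul_sub, Matrix.sub_mul, Matrix.mul_smul, Matrix.mul_one,
        Matrix.smul_mul, hSS, hSHS]
    rwa [e] at h3
  have h4 := h2.dotProduct_mulVec_nonneg v
  have e2 : dotProduct (star v) ((c • Y - X) *ᵥ v)
      = c * dotProduct v (Y *ᵥ v) - dotProduct v (X *ᵥ v) := by
    rw [Matrix.sub_mulVec, dotProduct_sub, Matrix.smul_mulVec,
      dotProduct_smul, star_trivial, smul_eq_mul]
  rw [e2] at h4
  linarith

noncomputable def dTeich' {n : ℕ} (X Y : Matrix (Fin n) (Fin n) ℝ) : ℝ :=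
  (1 / 2) * sSup {r : ℝ | ∃ lam ∈ spectrum ℝ (X * Y⁻¹), r = |Real.log lam|}

lemma tset_eq {X Y : Matrix (Fin n) (Fin n) ℝ} :
    {r : ℝ | ∃ lam ∈ spectrum ℝ (X * Y⁻¹), r = |Real.log lam|}
      = (fun lam => |Real.log lam|) '' spectrum ℝ (X * Y⁻¹) := by
  ext r
  simp [Set.mem_image, eq_comm]

lemma tset_bdd {X Y : Matrix (Fin n) (Fin n) ℝ} (hX : X.PosDef) (hY : Y.PosDef) :
    BddAbove {r : ℝ | ∃ lam ∈ spectrum ℝ (X * Y⁻¹), r = |Real.log lam|} := by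
  obtain ⟨S, H, hSh, hSS, hS1, hS2, hHdef, hH, hspec, hSHS⟩ := conj_facts hX hY
  rw [tset_eq, hspec, herm_spec hH.isHermitian]
  exact ((Set.finite_range _).image _).bddAbove

lemma dTeich'_nonneg {X Y : Matrix (Fin n) (Fin n) ℝ} : 0 ≤ dTeich' X Y := by
  unfold dTeich'
  have : (0:ℝ) ≤ sSup {r : ℝ | ∃ lam ∈ spectrum ℝ (X * Y⁻¹), r = |Real.log lam|} := by
    apply Real.sSup_nonneg
    rintro r ⟨lam, _, rfl⟩
    exact abs_nonneg _
  linarith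

lemma mem_le_dTeich' {X Y : Matrix (Fin n) (Fin n) ℝ} (hX : X.PosDef) (hY : Y.PosDef)
    {lam : ℝ} (hmem : lam ∈ spectrum ℝ (X * Y⁻¹)) :
    |Real.log lam| ≤ 2 * dTeich' X Y := by
  have h := le_csSup (tset_bdd hX hY) (show |Real.log lam| ∈ _ from ⟨lam, hmem, rfl⟩)
  unfold dTeich'
  linarith

lemma spec_bounds {X Y : Matrix (Fin n) (Fin n) ℝ} (hX : X.PosDef) (hY : Y.PosDef)
    {lam : ℝ} (hmem : lam ∈ spectrum ℝ (X * Y⁻¹)) :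
    Real.exp (-(2 * dTeich' X Y)) ≤ lam ∧ lam ≤ Real.exp (2 * dTeich' X Y) := by
  have hpos := spec_pos hX hY lam hmem
  have habs := mem_le_dTeich' hX hY hmem
  rw [abs_le] at habs
  constructor
  · calc Real.exp (-(2 * dTeich' X Y)) ≤ Real.exp (Real.log lam) :=
          Real.exp_le_exp.mpr habs.1
      _ = lam := Real.exp_log hpos
  · calc lam = Real.exp (Real.log lam) := (Real.exp_log hpos).symm
      _ ≤ Real.exp (2 * dTeich' X Y) := Real.exp_le_exp.mpr habs.2

lemma spec_inv {X Y : Matrix (Fin n) (Fin n) ℝ} (hX : X.PosDef) (hY : Y.PosDef)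
    {lam : ℝ} (hmem : lam ∈ spectrum ℝ (X * Y⁻¹)) : lam⁻¹ ∈ spectrum ℝ (Y * X⁻¹) := by
  have hpos := spec_pos hX hY lam hmem
  obtain ⟨v, hv, h⟩ := (mem_spec_iff hY lam).mp hmem
  refine (mem_spec_iff hX lam⁻¹).mpr ⟨v, hv, ?_⟩
  rw [h, smul_smul, inv_mul_cancel₀ (ne_of_gt hpos), one_smul]

lemma quad_ge {X Y : Matrix (Fin n) (Fin n) ℝ} (hX : X.PosDef) (hY : Y.PosDef)
    (v : Fin n → ℝ) :
    Real.exp (-(2 * dTeich' X Y)) * dotProduct v (Y *ᵥ v)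
      ≤ dotProduct v (X *ᵥ v) := by
  have key : ∀ mu ∈ spectrum ℝ (Y * X⁻¹), mu ≤ Real.exp (2 * dTeich' X Y) := by
    intro mu hmu
    have hmupos := spec_pos hY hX mu hmu
    have hinv := spec_inv hY hX hmu
    have hb := (spec_bounds hX hY hinv).1
    have h1 : Real.exp (-(2 * dTeich' X Y)) * mu ≤ mu⁻¹ * mu :=
      mul_le_mul_of_nonneg_right hb (le_of_lt hmupos)
    rw [inv_mul_cancel₀ (ne_of_gt hmupos)] at h1
    have h2 := Real.exp_pos (-(2 * dTeich' X Y))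
    have h3 : Real.exp (-(2 * dTeich' X Y)) * Real.exp (2 * dTeich' X Y) = 1 := by
      rw [← Real.exp_add]; ring_nf; exact Real.exp_zero
    nlinarith
  have h := quad_le hY hX key v
  have h3 : Real.exp (-(2 * dTeich' X Y)) * Real.exp (2 * dTeich' X Y) = 1 := by
    rw [← Real.exp_add]; ring_nf; exact Real.exp_zero
  have h2 := Real.exp_pos (-(2 * dTeich' X Y))
  have h4 := mul_le_mul_of_nonneg_left h (le_of_lt h2)
  have h5 : Real.exp (-(2 * dTeich' X Y))
      * (Real.exp (2 * dTeich' X Y) * dotProduct v (X *ᵥ v))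
      = dotProduct v (X *ᵥ v) := by
    rw [← mul_assoc, h3, one_mul]
  linarith

lemma dTeich'_symm {X Y : Matrix (Fin n) (Fin n) ℝ} (hX : X.PosDef) (hY : Y.PosDef) :
    dTeich' X Y = dTeich' Y X := by
  unfold dTeich'
  congr 1
  congr 1
  ext r
  constructor
  · rintro ⟨lam, hmem, rfl⟩
    refine ⟨lam⁻¹, spec_inv hX hY hmem, ?_⟩
    rw [Real.log_inv, abs_neg]
  · rintro ⟨lam, hmem, rfl⟩
    refine ⟨lam⁻¹, spec_inv hY hX hmem, ?_⟩
    rw [Real.log_inv, abs_neg]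

lemma dTeich'_triangle {X Y Z : Matrix (Fin n) (Fin n) ℝ}
    (hX : X.PosDef) (hY : Y.PosDef) (hZ : Z.PosDef) :
    dTeich' X Z ≤ dTeich' X Y + dTeich' Y Z := by
  set d1 := dTeich' X Y
  set d2 := dTeich' Y Z
  have hd1 : 0 ≤ d1 := dTeich'_nonneg
  have hd2 : 0 ≤ d2 := dTeich'_nonneg
  have key : ∀ lam ∈ spectrum ℝ (X * Z⁻¹), |Real.log lam| ≤ 2 * (d1 + d2) := by
    intro lam hmem
    have hpos := spec_pos hX hZ lam hmem
    obtain ⟨v, hv, h⟩ := (mem_spec_iff hZ lam).mp hmem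
    have hqZ : 0 < dotProduct v (Z *ᵥ v) := by
      have := hZ.dotProduct_mulVec_pos hv
      rwa [star_trivial] at this
    have hqX : dotProduct v (X *ᵥ v) = lam * dotProduct v (Z *ᵥ v) := by
      rw [h, dotProduct_smul, smul_eq_mul]
    -- upper bound
    have hub1 : ∀ mu ∈ spectrum ℝ (X * Y⁻¹), mu ≤ Real.exp (2 * d1) := fun mu hmu =>
      (spec_bounds hX hY hmu).2
    have hub2 : ∀ mu ∈ spectrum ℝ (Y * Z⁻¹), mu ≤ Real.exp (2 * d2) := fun mu hmu =>
      (spec_bounds hY hZ hmu).2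
    have up : lam * dotProduct v (Z *ᵥ v)
        ≤ Real.exp (2 * d1) * Real.exp (2 * d2) * dotProduct v (Z *ᵥ v) := by
      calc lam * dotProduct v (Z *ᵥ v) = dotProduct v (X *ᵥ v) := hqX.symm
        _ ≤ Real.exp (2 * d1) * dotProduct v (Y *ᵥ v) := quad_le hX hY hub1 v
        _ ≤ Real.exp (2 * d1) * (Real.exp (2 * d2) * dotProduct v (Z *ᵥ v)) := by
            have := quad_le hY hZ hub2 v
            exact mul_le_mul_of_nonneg_left this (le_of_lt (Real.exp_pos _))
        _ = Real.exp (2 * d1) * Real.exp (2 * d2) * dotProduct v (Z *ᵥ v) := by ring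
    have low : Real.exp (-(2 * d1)) * Real.exp (-(2 * d2)) * dotProduct v (Z *ᵥ v)
        ≤ lam * dotProduct v (Z *ᵥ v) := by
      calc Real.exp (-(2 * d1)) * Real.exp (-(2 * d2)) * dotProduct v (Z *ᵥ v)
          = Real.exp (-(2 * d1)) * (Real.exp (-(2 * d2)) * dotProduct v (Z *ᵥ v)) := by
            ring
        _ ≤ Real.exp (-(2 * d1)) * dotProduct v (Y *ᵥ v) := by
            have := quad_ge hY hZ v
            exact mul_le_mul_of_nonneg_left this (le_of_lt (Real.exp_pos _))
        _ ≤ dotProduct v (X *ᵥ v) := quad_ge hX hY v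
        _ = lam * dotProduct v (Z *ᵥ v) := hqX
    have hlam_up : lam ≤ Real.exp (2 * (d1 + d2)) := by
      have := (mul_le_mul_iff_of_pos_right hqZ).mp up
      calc lam ≤ Real.exp (2 * d1) * Real.exp (2 * d2) := this
        _ = Real.exp (2 * (d1 + d2)) := by rw [← Real.exp_add]; ring_nf
    have hlam_low : Real.exp (-(2 * (d1 + d2))) ≤ lam := by
      have := (mul_le_mul_iff_of_pos_right hqZ).mp low
      calc Real.exp (-(2 * (d1 + d2))) = Real.exp (-(2 * d1)) * Real.exp (-(2 * d2)) := by
            rw [← Real.exp_add]; ring_nf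
        _ ≤ lam := this
    rw [abs_le]
    constructor
    · have := Real.log_le_log (Real.exp_pos _) hlam_low
      rwa [Real.log_exp] at this
    · have := Real.log_le_log hpos hlam_up
      rwa [Real.log_exp] at this
  have hsup : sSup {r : ℝ | ∃ lam ∈ spectrum ℝ (X * Z⁻¹), r = |Real.log lam|}
      ≤ 2 * (d1 + d2) := by
    apply Real.sSup_le
    · rintro r ⟨lam, hmem, rfl⟩
      exact key lam hmem
    · linarith
  show (1 / 2) * sSup {r : ℝ | ∃ lam ∈ spectrum ℝ (X * Z⁻¹), r = |Real.log lam|} ≤ d1 + d2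
  linarith

lemma dTeich'_self {X : Matrix (Fin n) (Fin n) ℝ} (hX : X.PosDef) : dTeich' X X = 0 := by
  have h1 : X * X⁻¹ = 1 := mul_nonsing_inv _ (isUnit_iff_ne_zero.2 (ne_of_gt hX.det_pos))
  refine le_antisymm ?_ dTeich'_nonneg
  unfold dTeich'
  have hsup : sSup {r : ℝ | ∃ lam ∈ spectrum ℝ (X * X⁻¹), r = |Real.log lam|} ≤ 0 := by
    apply Real.sSup_le _ le_rfl
    rintro r ⟨lam, hmem, rfl⟩
    rw [h1] at hmem
    rcases Nat.eq_zero_or_pos n with hn | hn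
    · subst hn
      rw [spectrum.mem_iff] at hmem
      exact absurd (isUnit_of_subsingleton _) hmem
    · haveI : Nonempty (Fin n) := Fin.pos_iff_nonempty.mp hn
      rw [spectrum.one_eq, Set.mem_singleton_iff] at hmem
      subst hmem
      simp
  linarith

lemma dTeich'_eq_zero {X Y : Matrix (Fin n) (Fin n) ℝ} (hX : X.PosDef) (hY : Y.PosDef)
    (h0 : dTeich' X Y = 0) : X = Y := by
  rcases Nat.eq_zero_or_pos n with hn | hn
  · subst hn
    ext i j
    exact i.elim0
  · obtain ⟨S, H, hSh, hSS, hS1, hS2, hHdef, hH, hspec, hSHS⟩ := conj_facts hX hY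
    have heig : ∀ i, hH.isHermitian.eigenvalues i = 1 := by
      intro i
      have hm := hH.isHermitian.eigenvalues_mem_spectrum_real i
      rw [← hspec] at hm
      have habs := mem_le_dTeich' hX hY hm
      rw [h0] at habs
      have hpos := spec_pos hX hY _ hm
      have : |Real.log (hH.isHermitian.eigenvalues i)| = 0 := le_antisymm (by linarith) (abs_nonneg _)
      have hlog : Real.log (hH.isHermitian.eigenvalues i) = 0 := abs_eq_zero.mp this
      have := Real.exp_log hpos
      rw [hlog, Real.exp_zero] at this
      exact this.symm
    have hH1 : H = 1 := by
      have hdiag : diagonal (RCLike.ofReal ∘ hH.isHermitian.eigenvalues)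
          = (1 : Matrix (Fin n) (Fin n) ℝ) := by
        rw [show (RCLike.ofReal ∘ hH.isHermitian.eigenvalues : Fin n → ℝ) = fun _ => 1 from
          funext fun i => by simp [heig i], diagonal_one]
      calc H = (hH.isHermitian.eigenvectorUnitary : Matrix (Fin n) (Fin n) ℝ)
            * diagonal (RCLike.ofReal ∘ hH.isHermitian.eigenvalues)
            * (star hH.isHermitian.eigenvectorUnitary : Matrix (Fin n) (Fin n) ℝ) :=
          hH.isHermitian.spectral_theorem
        _ = 1 := by
          rw [hdiag, Matrix.mul_one]
          exact (Matrix.mem_unitaryGroup_iff).mp hH.isHermitian.eigenvectorUnitary.2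
    rw [hH1, Matrix.mul_one, hSS] at hSHS
    exact hSHS.symm

lemma dTeich_eq_dTeich' {n : ℕ} (X Y : Matrix (Fin n) (Fin n) ℝ) : dTeich X Y = dTeich' X Y := rfl

/-- `d_Teich` is a metric on the set of positive-definite symmetric real `n × n`
matrices of determinant 1: nonnegative, symmetric, vanishing exactly on the diagonal,
and satisfying the triangle inequality. -/
theorem dTeich_is_metric (n : ℕ) :
    (∀ X Y : Matrix (Fin n) (Fin n) ℝ, X.PosDef → Y.PosDef → X.det = 1 → Y.det = 1 →
      0 ≤ dTeich X Y) ∧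
    (∀ X Y : Matrix (Fin n) (Fin n) ℝ, X.PosDef → Y.PosDef → X.det = 1 → Y.det = 1 →
      dTeich X Y = dTeich Y X) ∧
    (∀ X Y : Matrix (Fin n) (Fin n) ℝ, X.PosDef → Y.PosDef → X.det = 1 → Y.det = 1 →
      (dTeich X Y = 0 ↔ X = Y)) ∧
    (∀ X Y Z : Matrix (Fin n) (Fin n) ℝ, X.PosDef → Y.PosDef → Z.PosDef →
      X.det = 1 → Y.det = 1 → Z.det = 1 →
      dTeich X Z ≤ dTeich X Y + dTeich Y Z) := by
  refine ⟨?_, ?_, ?_, ?_⟩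
  · intro X Y hX hY _ _
    rw [dTeich_eq_dTeich']
    exact dTeich'_nonneg
  · intro X Y hX hY _ _
    rw [dTeich_eq_dTeich', dTeich_eq_dTeich']
    exact dTeich'_symm hX hY
  · intro X Y hX hY _ _
    rw [dTeich_eq_dTeich']
    constructor
    · exact dTeich'_eq_zero hX hY
    · rintro rfl
      exact dTeich'_self hX
  · intro X Y Z hX hY hZ _ _ _
    rw [dTeich_eq_dTeich', dTeich_eq_dTeich', dTeich_eq_dTeich']
    exact dTeich'_triangle hX hY hZ
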